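/- arXiv:1302.5436 — 5 statements merged into one kernel-verified Lean document; each statement's English description precedes it below -/
import Mathlib

section
/- For all integers m, n ≥ 2, the function f_{m,n}(p) = 1 − (1 − p^n)^m has exactly one fixed point in the open interval (0,1); that is, there exists a unique p ∈ (0,1) with 1 − (1 − p^n)^m = p. -/
open Set

private lemma diamond_hasDerivAt (m n : ℕ) (r : ℝ) :
    HasDerivAt (fun p : ℝ => 1 - (1 - p ^ n) ^ m - p)
      ((m : ℝ) * (n : ℝ) * r ^ (n - 1) * (1 - r ^ n) ^ (m - 1) - 1) r := by
  have h1 : HasDerivAt (fun p : ℝ => 1 - p ^ n) (-((n : ℝ) * r ^ (n - 1))) r :=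
    (hasDerivAt_pow n r).const_sub 1
  have h2 := h1.pow m
  have h3 := (h2.const_sub 1).sub (hasDerivAt_id r)
  exact h3.congr_deriv (by ring)

private lemma diamond_sum_lt (n : ℕ) (hn : 2 ≤ n) {r : ℝ} (hr0 : 0 < r) (hr1 : r < 1) :
    ∑ i ∈ Finset.range n, r ^ i < n := by
  have : ∑ i ∈ Finset.range n, r ^ i < ∑ i ∈ Finset.range n, (1 : ℝ) := by
    refine Finset.sum_lt_sum (fun i _ => pow_le_one₀ hr0.le hr1.le) ⟨1, ?_, ?_⟩
    · simp [Finset.mem_range]; omega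
    · simpa using hr1
  simpa using this

private lemma diamond_deriv_pos (m n : ℕ) (hm : 2 ≤ m) (hn : 2 ≤ n) {r : ℝ}
    (hr0 : 0 < r) (hr1 : r < 1) (hfix : (1 - r ^ n) ^ m = 1 - r) :
    1 < (m : ℝ) * (n : ℝ) * r ^ (n - 1) * (1 - r ^ n) ^ (m - 1) := by
  have hrn0 : 0 < r ^ n := pow_pos hr0 n
  have hrn1 : r ^ n < 1 := pow_lt_one₀ hr0.le hr1 (by omega)
  have h1n : 0 < 1 - r ^ n := by linarith
  -- Step 1 : 1 < m * r ^ (n-1)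
  have step1 : 1 < (m : ℝ) * r ^ (n - 1) := by
    by_contra hle
    push_neg at hle
    -- strict Bernoulli : (1 - r^n)^m > 1 - m * r^n
    have hB : 1 + (m : ℝ) * (-(r ^ n)) < (1 + -(r ^ n)) ^ (m : ℝ) := by
      refine one_add_mul_self_lt_rpow_one_add (by linarith) (by intro h; nlinarith) ?_
      exact_mod_cast by omega
    rw [Real.rpow_natCast] at hB
    have hmn : (m : ℝ) * r ^ n ≤ r := by
      have : (m : ℝ) * r ^ n = ((m : ℝ) * r ^ (n - 1)) * r := by
        rw [mul_assoc, ← pow_succ]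
        congr 2
        omega
      rw [this]
      nlinarith
    have : (1 - r ^ n) ^ m > 1 - r := by
      have : (1 : ℝ) + -(r ^ n) = 1 - r ^ n := by ring
      rw [this] at hB
      nlinarith
    linarith
  -- Step 2
  have hgeom : (1 - r) * (∑ i ∈ Finset.range n, r ^ i) = 1 - r ^ n := by
    have := geom_sum_mul r n
    nlinarith [this]
  have hsum : (∑ i ∈ Finset.range n, r ^ i) < n := diamond_sum_lt n hn hr0 hr1
  have hpow : (1 - r ^ n) ^ m = (1 - r ^ n) ^ (m - 1) * (1 - r ^ n) := by
    rw [← pow_succ]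
    congr 1
    omega
  -- suffices : (1 - r^n) < m*n*r^(n-1) * (1-r)
  have key : 1 - r ^ n < (m : ℝ) * n * r ^ (n - 1) * (1 - r) := by
    calc 1 - r ^ n = (1 - r) * (∑ i ∈ Finset.range n, r ^ i) := hgeom.symm
      _ < (1 - r) * n := by
          apply mul_lt_mul_of_pos_left hsum (by linarith)
      _ ≤ ((m : ℝ) * r ^ (n - 1)) * ((1 - r) * (n : ℝ)) :=
          le_mul_of_one_le_left (mul_nonneg (by linarith) (by positivity)) step1.le
      _ = (m : ℝ) * n * r ^ (n - 1) * (1 - r) := by ring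
  have hpm1 : 0 < (1 - r ^ n) ^ (m - 1) := pow_pos h1n _
  rw [hpow] at hfix
  -- 1 - r = (1-r^n)^(m-1) * (1-r^n)
  -- goal: 1 < m*n*r^(n-1) * (1-r^n)^(m-1)
  have := mul_lt_mul_of_pos_left key hpm1
  nlinarith [hpm1, h1n]

private lemma slope_right {g : ℝ → ℝ} {d x c : ℝ} (hd : HasDerivAt g d x) (hdpos : 0 < d)
    (hxc : x < c) : ∃ y ∈ Ioo x c, g x < g y := by
  have hs := hasDerivAt_iff_tendsto_slope.1 hd
  have hs' : Filter.Tendsto (slope g x) (nhdsWithin x (Ioi x)) (nhds d) :=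
    hs.mono_left (nhdsWithin_mono _ (fun y hy => ne_of_gt hy))
  have h1 : ∀ᶠ y in nhdsWithin x (Ioi x), 0 < slope g x y :=
    hs'.eventually (eventually_gt_nhds hdpos)
  have h2 : ∀ᶠ y in nhdsWithin x (Ioi x), y ∈ Ioo x c :=
    Ioo_mem_nhdsGT_of_mem ⟨le_refl x, hxc⟩
  obtain ⟨y, hy1, hy2⟩ := (h1.and h2).exists
  refine ⟨y, hy2, ?_⟩
  have hyx : 0 < y - x := sub_pos.2 hy2.1
  rw [slope_def_field, div_pos_iff] at hy1
  rcases hy1 with ⟨h, _⟩ | ⟨_, h⟩ <;> linarith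

private lemma slope_left {g : ℝ → ℝ} {d x c : ℝ} (hd : HasDerivAt g d x) (hdpos : 0 < d)
    (hcx : c < x) : ∃ y ∈ Ioo c x, g y < g x := by
  have hs := hasDerivAt_iff_tendsto_slope.1 hd
  have hs' : Filter.Tendsto (slope g x) (nhdsWithin x (Iio x)) (nhds d) :=
    hs.mono_left (nhdsWithin_mono _ (fun y hy => ne_of_lt hy))
  have h1 : ∀ᶠ y in nhdsWithin x (Iio x), 0 < slope g x y :=
    hs'.eventually (eventually_gt_nhds hdpos)
  have h2 : ∀ᶠ y in nhdsWithin x (Iio x), y ∈ Ioo c x :=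
    Ioo_mem_nhdsLT_of_mem ⟨hcx, le_refl x⟩
  obtain ⟨y, hy1, hy2⟩ := (h1.and h2).exists
  refine ⟨y, hy2, ?_⟩
  have hyx : y - x < 0 := sub_neg.2 hy2.2
  rw [slope_def_field, div_pos_iff] at hy1
  rcases hy1 with ⟨_, h⟩ | ⟨h, _⟩ <;> linarith

private lemma diamond_no_two_roots (m n : ℕ) (hm : 2 ≤ m) (hn : 2 ≤ n) {p q : ℝ}
    (hp : p ∈ Ioo (0:ℝ) 1) (hq : q ∈ Ioo (0:ℝ) 1)
    (hgp : 1 - (1 - p ^ n) ^ m - p = 0) (hgq : 1 - (1 - q ^ n) ^ m - q = 0)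
    (hpq : p < q) : False := by
  set g : ℝ → ℝ := fun x => 1 - (1 - x ^ n) ^ m - x with hg
  have hcont : Continuous g := by fun_prop
  -- derivative positive at q, get c ∈ (p,q) with g c < 0
  have hdq := diamond_deriv_pos m n hm hn hq.1 hq.2 (by linarith)
  obtain ⟨c, hc, hgc⟩ := slope_left (diamond_hasDerivAt m n q) (by linarith) hpq
  have hgc : g c < 0 := by simp only [hg]; linarith
  -- the set of roots in [p, c]
  set S : Set ℝ := Icc p c ∩ g ⁻¹' {0} with hS
  have hSne : S.Nonempty := ⟨p, ⟨le_refl p, hc.1.le⟩, hgp⟩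
  have hSbdd : BddAbove S := BddAbove.mono Set.inter_subset_left bddAbove_Icc
  have hSclosed : IsClosed S := isClosed_Icc.inter (isClosed_singleton.preimage hcont)
  set r := sSup S with hr
  have hrS : r ∈ S := hSclosed.csSup_mem hSne hSbdd
  obtain ⟨⟨hpr, hrc⟩, hgr⟩ := hrS
  have hgr : g r = 0 := hgr
  have hrc' : r < c := lt_of_le_of_ne hrc (fun h => by rw [h] at hgr; linarith)
  have hr0 : 0 < r := lt_of_lt_of_le hp.1 hpr
  have hr1 : r < 1 := lt_trans (lt_trans hrc' hc.2) hq.2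
  have hgr2 : (1 - r ^ n) ^ m = 1 - r := by
    have := hgr; simp only [hg] at this; linarith
  have hdr := diamond_deriv_pos m n hm hn hr0 hr1 hgr2
  obtain ⟨y, hy, hgy⟩ := slope_right (diamond_hasDerivAt m n r) (by linarith) hrc'
  have hgy : 0 < g y := by simp only [hg] at hgr ⊢; linarith
  -- IVT on [y, c] : g y > 0 > g c
  have hivt := intermediate_value_Ioo' hy.2.le (hcont.continuousOn (s := Icc y c))
  obtain ⟨z, hz, hgz⟩ := hivt (show (0:ℝ) ∈ Ioo (g c) (g y) from ⟨hgc, hgy⟩)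
  have hzS : z ∈ S := ⟨⟨by linarith [hz.1, hy.1], hz.2.le⟩, hgz⟩
  have := le_csSup hSbdd hzS
  linarith [hz.1, hy.1]

private lemma diamond_exists_root (m n : ℕ) (hm : 2 ≤ m) (hn : 2 ≤ n) :
    ∃ p ∈ Ioo (0:ℝ) 1, 1 - (1 - p ^ n) ^ m = p := by
  set g : ℝ → ℝ := fun x => 1 - (1 - x ^ n) ^ m - x with hg
  have hcont : Continuous g := by fun_prop
  have hmR : (2:ℝ) ≤ m := by exact_mod_cast hm
  have hnR : (2:ℝ) ≤ n := by exact_mod_cast hn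
  set p₀ : ℝ := 1 / (2 * m) with hp₀
  set ε : ℝ := 1 / (n:ℝ) ^ m with hε
  set p₁ : ℝ := 1 - ε with hp₁
  have hp₀pos : 0 < p₀ := by positivity
  have hp₀le : p₀ ≤ 1/4 := by
    rw [hp₀]
    rw [div_le_div_iff₀ (by linarith) (by norm_num)]
    linarith
  have hnm4 : (4:ℝ) ≤ (n:ℝ) ^ m := by
    calc (4:ℝ) = 2 ^ 2 := by norm_num
      _ ≤ 2 ^ m := pow_le_pow_right₀ one_le_two hm
      _ ≤ (n:ℝ) ^ m := pow_le_pow_left₀ (by norm_num) hnR m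
  have hεpos : 0 < ε := by positivity
  have hεle : ε ≤ 1/4 := by
    rw [hε, div_le_div_iff₀ (by linarith) (by norm_num)]
    linarith
  have hp₁lt1 : p₁ < 1 := by simp only [hp₁]; linarith
  have hp₀p₁ : p₀ < p₁ := by simp only [hp₁]; linarith
  have hp₁pos : 0 < p₁ := by simp only [hp₁]; linarith
  -- g p₀ < 0
  have hgp₀ : g p₀ < 0 := by
    have hple1 : p₀ ^ n ≤ 1 := pow_le_one₀ hp₀pos.le (by linarith)
    have hB : 1 + (m:ℝ) * (-(p₀ ^ n)) ≤ (1 + -(p₀ ^ n)) ^ m :=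
      one_add_mul_le_pow (by linarith) m
    have hpow2 : p₀ ^ n ≤ p₀ ^ 2 :=
      pow_le_pow_of_le_one hp₀pos.le (by linarith) hn
    have hmp : (m:ℝ) * p₀ ^ n < p₀ := by
      have h2 : (m:ℝ) * p₀ ^ 2 = p₀ / 2 := by
        rw [hp₀]; field_simp
      nlinarith
    simp only [hg]
    have heq : (1 : ℝ) + -(p₀ ^ n) = 1 - p₀ ^ n := by ring
    rw [heq] at hB
    have : 1 - (m:ℝ) * p₀ ^ n ≤ (1 - p₀ ^ n) ^ m := by linarith
    linarith
  -- g p₁ > 0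
  have hgp₁ : 0 < g p₁ := by
    have hgeom : (1 - p₁) * (∑ i ∈ Finset.range n, p₁ ^ i) = 1 - p₁ ^ n := by
      have := geom_sum_mul p₁ n
      nlinarith [this]
    have hsum : (∑ i ∈ Finset.range n, p₁ ^ i) < n := diamond_sum_lt n hn hp₁pos hp₁lt1
    have h1 : 1 - p₁ ^ n < ε * n := by
      rw [← hgeom, show (1:ℝ) - p₁ = ε by simp [hp₁]]
      exact mul_lt_mul_of_pos_left hsum hεpos
    have h0 : 0 ≤ 1 - p₁ ^ n := by
      have : p₁ ^ n ≤ 1 := pow_le_one₀ hp₁pos.le hp₁lt1.le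
      linarith
    have h2 : (1 - p₁ ^ n) ^ m < (ε * n) ^ m :=
      pow_lt_pow_left₀ h1 h0 (by omega)
    have h3 : (ε * n) ^ m ≤ ε := by
      have heq : ε * n = (n:ℝ) / (n:ℝ) ^ m := by rw [hε]; ring
      rw [heq, div_pow, hε, div_le_div_iff₀ (by positivity) (by positivity)]
      rw [one_mul, ← pow_add, ← pow_mul]
      exact pow_le_pow_right₀ (by linarith) (by nlinarith)
    simp only [hg]
    have : (1 - p₁ ^ n) ^ m < 1 - p₁ := by
      rw [show (1:ℝ) - p₁ = ε by simp [hp₁]]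
      linarith
    linarith
  have hivt := intermediate_value_Ioo hp₀p₁.le (hcont.continuousOn (s := Icc p₀ p₁))
  obtain ⟨x, hx, hgx⟩ := hivt (show (0:ℝ) ∈ Ioo (g p₀) (g p₁) from ⟨hgp₀, hgp₁⟩)
  refine ⟨x, ⟨lt_trans hp₀pos hx.1, lt_trans hx.2 hp₁lt1⟩, ?_⟩
  have : g x = 0 := hgx
  simp only [hg] at this
  linarith

/-- For all integers `m, n ≥ 2`, the function `f_{m,n}(p) = 1 − (1 − p^n)^m` has exactly one
fixed point in the open interval `(0,1)`. -/
theorem diamond_unique_interior_fixed_point (m n : ℕ) (hm : 2 ≤ m) (hn : 2 ≤ n) :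
    ∃! p : ℝ, p ∈ Set.Ioo (0 : ℝ) 1 ∧ 1 - (1 - p ^ n) ^ m = p := by
  obtain ⟨p, hp, hfp⟩ := diamond_exists_root m n hm hn
  refine ⟨p, ⟨hp, hfp⟩, ?_⟩
  rintro q ⟨hq, hfq⟩
  rcases lt_trichotomy q p with h | h | h
  · exact absurd (diamond_no_two_roots m n hm hn hq hp (by linarith) (by linarith) h) id
  · exact h
  · exact absurd (diamond_no_two_roots m n hm hn hp hq (by linarith) (by linarith) h) id
end

section
/- For all integers m, n ≥ 2, if p_c ∈ (0,1) is a fixed point of f_{m,n}(p) = 1 − (1 − p^n)^m, then the derivative of f_{m,n} at p_c, which equals m·n·p_c^{n−1}·(1 − p_c^n)^{m−1}, is strictly greater than 1; that is, the interior fixed point of f_{m,n} is repelling. -/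
/-- Strict Bernoulli inequality: for `x ∈ (0,1)` and `2 ≤ k`, `1 - k*x < (1-x)^k`. -/
lemma strict_bernoulli {x : ℝ} (hx0 : 0 < x) (hx1 : x < 1) {k : ℕ} (hk : 2 ≤ k) :
    1 - (k : ℝ) * x < (1 - x) ^ k := by
  have hs : (-1 : ℝ) ≤ -x := by linarith
  have hs' : (-x : ℝ) ≠ 0 := by linarith
  have hp : (1 : ℝ) < (k : ℝ) := by exact_mod_cast lt_of_lt_of_le one_lt_two hk
  have h := one_add_mul_self_lt_rpow_one_add hs hs' hp
  have h2 : (1 + -x) ^ ((k : ℕ) : ℝ) = (1 - x) ^ k := by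
    rw [show (1 : ℝ) + -x = 1 - x by ring, Real.rpow_natCast]
  rw [h2] at h
  linarith

/-- For all integers `m, n ≥ 2`, if `p_c ∈ (0,1)` is a fixed point of
`f_{m,n}(p) = 1 − (1 − p^n)^m`, then the derivative of `f_{m,n}` at `p_c`, which equals
`m·n·p_c^{n−1}·(1 − p_c^n)^{m−1}`, is strictly greater than `1`: the interior fixed point
is repelling. -/
theorem diamond_interior_fixed_point_repelling (m n : ℕ) (hm : 2 ≤ m) (hn : 2 ≤ n)
    (p_c : ℝ) (hpc : p_c ∈ Set.Ioo (0 : ℝ) 1) (hfix : 1 - (1 - p_c ^ n) ^ m = p_c) :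
    deriv (fun p : ℝ => 1 - (1 - p ^ n) ^ m) p_c
      = (m : ℝ) * n * p_c ^ (n - 1) * (1 - p_c ^ n) ^ (m - 1) ∧
    1 < (m : ℝ) * n * p_c ^ (n - 1) * (1 - p_c ^ n) ^ (m - 1) := by
  obtain ⟨hp0, hp1⟩ := hpc
  set q : ℝ := p_c ^ n with hq
  have hq0 : 0 < q := pow_pos hp0 n
  have hq1 : q < 1 := pow_lt_one₀ hp0.le hp1 (by omega)
  -- derivative
  have hder : HasDerivAt (fun p : ℝ => 1 - (1 - p ^ n) ^ m)
      ((m : ℝ) * n * p_c ^ (n - 1) * (1 - q) ^ (m - 1)) p_c := by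
    have h1 : HasDerivAt (fun p : ℝ => 1 - p ^ n) (-(↑n * p_c ^ (n - 1))) p_c :=
      (hasDerivAt_pow n p_c).const_sub 1
    have h2 := (h1.pow m).const_sub 1
    refine h2.congr_deriv ?_
    ring
  have hd := hder.deriv
  refine ⟨hd, ?_⟩
  -- Bernoulli consequences
  have hB1 : 1 - (m : ℝ) * q < (1 - q) ^ m := strict_bernoulli hq0 hq1 hm
  have hB2 : 1 - (n : ℝ) * (1 - p_c) < (1 - (1 - p_c)) ^ n := by
    exact strict_bernoulli (by linarith) (by linarith) hn
  have hqm : (1 - q) ^ m = 1 - p_c := by linarith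
  have h1 : p_c < (m : ℝ) * q := by rw [hqm] at hB1; linarith
  have h2 : 1 - q < (n : ℝ) * (1 - p_c) := by
    have : (1 - (1 - p_c)) ^ n = q := by rw [hq]; ring_nf
    linarith [hB2.trans_eq this]
  have hkey : p_c * (1 - q) < ((m : ℝ) * q) * ((n : ℝ) * (1 - p_c)) :=
    mul_lt_mul'' h1 h2 hp0.le (by linarith)
  have hpos : 0 < p_c * (1 - q) := mul_pos hp0 (by linarith)
  have hfact : ((m : ℝ) * n * p_c ^ (n - 1) * (1 - q) ^ (m - 1)) * (p_c * (1 - q))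
      = ((m : ℝ) * q) * ((n : ℝ) * (1 - p_c)) := by
    have hpn : p_c * p_c ^ (n - 1) = q := by
      rw [hq, ← pow_succ']; congr 1; omega
    have hqn : (1 - q) * (1 - q) ^ (m - 1) = 1 - p_c := by
      rw [← hqm, ← pow_succ']; congr 1; omega
    calc ((m : ℝ) * n * p_c ^ (n - 1) * (1 - q) ^ (m - 1)) * (p_c * (1 - q))
        = (m : ℝ) * n * (p_c * p_c ^ (n - 1)) * ((1 - q) * (1 - q) ^ (m - 1)) := by ring
      _ = ((m : ℝ) * q) * ((n : ℝ) * (1 - p_c)) := by rw [hpn, hqn]; ring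
  have : 1 * (p_c * (1 - q)) < ((m : ℝ) * n * p_c ^ (n - 1) * (1 - q) ^ (m - 1)) * (p_c * (1 - q)) := by
    rw [hfact, one_mul]; exact hkey
  exact lt_of_mul_lt_mul_right this hpos.le
end

section
/- Let m, n ≥ 2 be integers and let p_c ∈ (0,1) be the unique fixed point of f_{m,n}(p) = 1 − (1 − p^n)^m in (0,1). Then for every p ∈ [0, p_c), the sequence of iterates f_{m,n}^{∘k}(p) converges to 0 as k → ∞. -/
/-- Let `m, n ≥ 2` be integers and `p_c ∈ (0,1)` the unique fixed point of
`f_{m,n}(p) = 1 − (1 − p^n)^m` in `(0,1)`. Then for every `p ∈ [0, p_c)` the iterates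
`f_{m,n}^{∘k}(p)` converge to `0` as `k → ∞`. -/
theorem diamond_iterates_tendsto_zero (m n : ℕ) (hm : 2 ≤ m) (hn : 2 ≤ n)
    (p_c : ℝ) (hpc : p_c ∈ Set.Ioo (0 : ℝ) 1) (hfix : 1 - (1 - p_c ^ n) ^ m = p_c)
    (huniq : ∀ q ∈ Set.Ioo (0 : ℝ) 1, 1 - (1 - q ^ n) ^ m = q → q = p_c) :
    ∀ p ∈ Set.Ico (0 : ℝ) p_c,
      Filter.Tendsto (fun k : ℕ => (fun q : ℝ => 1 - (1 - q ^ n) ^ m)^[k] p)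
        Filter.atTop (nhds 0) := by
  obtain ⟨hpc0, hpc1⟩ := hpc
  intro p hp
  obtain ⟨hp0, hppc⟩ := hp
  set f : ℝ → ℝ := fun q => 1 - (1 - q ^ n) ^ m with hf
  have hfc : Continuous f := by fun_prop
  have hmpos : (0:ℝ) < m := by positivity
  -- key pointwise facts
  have key : ∀ q : ℝ, 0 ≤ q → q < p_c → 0 ≤ f q ∧ f q ≤ q := by
    intro q hq0 hqc
    have hq1 : q ≤ 1 := le_of_lt (hqc.trans hpc1)
    have hqn1 : q ^ n ≤ 1 := pow_le_one₀ hq0 hq1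
    have hqn0 : 0 ≤ q ^ n := pow_nonneg hq0 n
    refine ⟨?_, ?_⟩
    · have h1 : (1 - q ^ n) ^ m ≤ 1 := pow_le_one₀ (by linarith) (by linarith)
      simp only [hf]; linarith
    · rcases eq_or_lt_of_le hq0 with h0 | h0
      · simp [hf, ← h0, zero_pow (by omega : n ≠ 0)]
      by_contra hlt
      push_neg at hlt
      -- hlt : q < f q
      set ε : ℝ := min q (1 / (2 * m)) with hε
      have hε0 : 0 < ε := lt_min h0 (by positivity)
      have hεq : ε ≤ q := min_le_left _ _
      have hε1 : ε ≤ 1 := hεq.trans hq1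
      have hεm : ε ≤ 1 / (2 * m) := min_le_right _ _
      -- Bernoulli bound: f ε ≤ m * ε ^ n
      have hεn0 : 0 ≤ ε ^ n := pow_nonneg hε0.le n
      have hεn1 : ε ^ n ≤ 1 := pow_le_one₀ hε0.le hε1
      have hbern : 1 - (m : ℝ) * ε ^ n ≤ (1 - ε ^ n) ^ m := by
        have h := one_add_mul_le_pow (a := -(ε ^ n)) (by linarith) m
        rw [mul_neg, ← sub_eq_add_neg, ← sub_eq_add_neg] at h
        exact h
      have hεpow : ε ^ n ≤ ε ^ 2 := pow_le_pow_of_le_one hε0.le hε1 hn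
      have hfε : f ε < ε := by
        have h1 : f ε ≤ (m : ℝ) * ε ^ n := by simp only [hf]; linarith
        have h2 : (m : ℝ) * ε ^ n ≤ (m : ℝ) * ε ^ 2 := by nlinarith
        have h3 : (m : ℝ) * ε ^ 2 ≤ ε / 2 := by
          have : (m : ℝ) * ε ≤ 1 / 2 := by
            have := mul_le_mul_of_nonneg_left hεm (le_of_lt hmpos)
            calc (m : ℝ) * ε ≤ (m : ℝ) * (1 / (2 * m)) := this
              _ = 1 / 2 := by field_simp
          nlinarith
        linarith
      -- intermediate value theorem on g = id - f
      set g : ℝ → ℝ := fun x => x - f x with hg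
      have hgc : ContinuousOn g (Set.Icc ε q) := (continuous_id.sub hfc).continuousOn
      have hsub : Set.Icc (g q) (g ε) ⊆ g '' Set.Icc ε q :=
        intermediate_value_Icc' hεq hgc
      have h0mem : (0 : ℝ) ∈ Set.Icc (g q) (g ε) := by
        constructor
        · simp only [hg]; linarith
        · simp only [hg]; linarith
      obtain ⟨r, hr, hgr⟩ := hsub h0mem
      have hfr : 1 - (1 - r ^ n) ^ m = r := by
        have : r - f r = 0 := hgr
        simp only [hf] at this ⊢; linarith
      have hr0 : 0 < r := lt_of_lt_of_le hε0 hr.1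
      have hr1 : r < 1 := lt_of_le_of_lt hr.2 (hqc.trans hpc1)
      exact absurd (huniq r ⟨hr0, hr1⟩ hfr) (ne_of_lt (lt_of_le_of_lt hr.2 hqc))
  -- sequence of iterates
  set a : ℕ → ℝ := fun k => f^[k] p with ha
  have hstep : ∀ k, a (k + 1) = f (a k) := by
    intro k; simp only [ha, Function.iterate_succ_apply']
  have hbounds : ∀ k, 0 ≤ a k ∧ a k < p_c := by
    intro k
    induction k with
    | zero => exact ⟨hp0, hppc⟩
    | succ k ih =>
      obtain ⟨h1, h2⟩ := ih
      obtain ⟨h3, h4⟩ := key (a k) h1 h2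
      rw [hstep]
      exact ⟨h3, lt_of_le_of_lt h4 h2⟩
  have hanti : Antitone a := by
    apply antitone_nat_of_succ_le
    intro k
    rw [hstep]
    exact (key (a k) (hbounds k).1 (hbounds k).2).2
  have hbdd : BddBelow (Set.range a) := ⟨0, by rintro x ⟨k, rfl⟩; exact (hbounds k).1⟩
  have htends : Filter.Tendsto a Filter.atTop (nhds (⨅ k, a k)) :=
    tendsto_atTop_ciInf hanti hbdd
  set L : ℝ := ⨅ k, a k with hL
  have hL0 : 0 ≤ L := le_ciInf fun k => (hbounds k).1
  have hLpc : L < p_c := lt_of_le_of_lt (ciInf_le hbdd 0) (hbounds 0).2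
  have hfix' : f L = L := by
    have h1 : Filter.Tendsto (fun k => a (k + 1)) Filter.atTop (nhds L) :=
      htends.comp (Filter.tendsto_add_atTop_nat 1)
    have h2 : Filter.Tendsto (fun k => f (a k)) Filter.atTop (nhds (f L)) :=
      (hfc.tendsto L).comp htends
    have h3 : (fun k => a (k + 1)) = fun k => f (a k) := funext hstep
    rw [h3] at h1
    exact tendsto_nhds_unique h2 h1
  have hL : L = 0 := by
    by_contra hne
    have hLpos : 0 < L := lt_of_le_of_ne hL0 (Ne.symm hne)
    have := huniq L ⟨hLpos, hLpc.trans hpc1⟩ hfix'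
    exact absurd this (ne_of_lt hLpc)
  rw [← hL]
  exact htends
end

section
/- Let m, n ≥ 2 be integers and let p_c ∈ (0,1) be the unique fixed point of f_{m,n}(p) = 1 − (1 − p^n)^m in (0,1). Then for every p ∈ (p_c, 1], the sequence of iterates f_{m,n}^{∘k}(p) converges to 1 as k → ∞. -/
/-- Let `m, n ≥ 2` be integers and `p_c ∈ (0,1)` the unique fixed point of
`f_{m,n}(p) = 1 − (1 − p^n)^m` in `(0,1)`. Then for every `p ∈ (p_c, 1]` the iterates
`f_{m,n}^{∘k}(p)` converge to `1` as `k → ∞`. -/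
theorem diamond_iterates_tendsto_one (m n : ℕ) (hm : 2 ≤ m) (hn : 2 ≤ n)
    (p_c : ℝ) (hpc : p_c ∈ Set.Ioo (0 : ℝ) 1) (hfix : 1 - (1 - p_c ^ n) ^ m = p_c)
    (huniq : ∀ q ∈ Set.Ioo (0 : ℝ) 1, 1 - (1 - q ^ n) ^ m = q → q = p_c) :
    ∀ p ∈ Set.Ioc p_c (1 : ℝ),
      Filter.Tendsto (fun k : ℕ => (fun q : ℝ => 1 - (1 - q ^ n) ^ m)^[k] p)
        Filter.atTop (nhds 1) := by
  intro p hp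
  obtain ⟨hpc0, hpc1⟩ := hpc
  set f : ℝ → ℝ := fun q => 1 - (1 - q ^ n) ^ m with hfdef
  have hcont : Continuous f := by
    apply Continuous.sub continuous_const
    exact (Continuous.sub continuous_const (continuous_pow n)).pow m
  have hf1 : f 1 = 1 := by
    simp [hfdef, zero_pow (by omega : m ≠ 0)]
  have hmono : ∀ a b : ℝ, 0 ≤ a → a ≤ b → b ≤ 1 → f a ≤ f b := by
    intro a b ha hab hb1
    have h1 : b ^ n ≤ 1 := pow_le_one₀ (ha.trans hab) hb1
    have h2 : a ^ n ≤ b ^ n := pow_le_pow_left₀ ha hab n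
    have h3 : (1 - b ^ n) ^ m ≤ (1 - a ^ n) ^ m :=
      pow_le_pow_left₀ (by linarith) (by linarith) m
    simp only [hfdef]; linarith
  -- arbitrarily close to 1 there are points with f r > r
  have hnear : ∀ q : ℝ, q < 1 → ∃ r : ℝ, q < r ∧ r < 1 ∧ r < f r := by
    intro q hq
    have hnm : (1 : ℝ) ≤ (n : ℝ) ^ m := one_le_pow₀ (by exact_mod_cast Nat.one_le_of_lt hn)
    have hnmpos : (0 : ℝ) < (n : ℝ) ^ m := by linarith
    set δ : ℝ := min ((1 - q) / 2) (1 / (2 * (n : ℝ) ^ m)) with hδdef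
    have hδpos : 0 < δ := lt_min (by linarith) (by positivity)
    have hδle : δ ≤ 1 / (2 * (n : ℝ) ^ m) := min_le_right _ _
    have hδhalf : δ ≤ 1 / 2 := by
      refine hδle.trans ?_
      rw [div_le_div_iff₀ (by linarith) (by norm_num)]
      nlinarith
    set r : ℝ := 1 - δ with hrdef
    have hr1 : r < 1 := by simp only [hrdef]; linarith
    have hqr : q < r := by
      have : δ ≤ (1 - q) / 2 := min_le_left _ _
      simp only [hrdef]; linarith
    refine ⟨r, hqr, hr1, ?_⟩
    -- Bernoulli: r^n ≥ 1 - n*δ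
    have hbern : 1 + (n : ℝ) * (-δ) ≤ (1 + (-δ)) ^ n :=
      one_add_mul_le_pow (by linarith) n
    have h1 : 1 - r ^ n ≤ (n : ℝ) * δ := by
      have : (1 + (-δ)) ^ n = r ^ n := by simp only [hrdef]; ring_nf
      linarith [hbern, this.symm.le, this.le]
    have h2 : 0 ≤ 1 - r ^ n := by
      have : r ^ n ≤ 1 := pow_le_one₀ (by simp only [hrdef]; linarith) hr1.le
      linarith
    have h3 : (1 - r ^ n) ^ m ≤ ((n : ℝ) * δ) ^ m := pow_le_pow_left₀ h2 h1 m
    have h4 : ((n : ℝ) * δ) ^ m = (n : ℝ) ^ m * δ ^ m := mul_pow _ _ _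
    have hδ1 : δ ≤ 1 := by linarith
    have h5 : δ ^ m ≤ δ ^ 2 := pow_le_pow_of_le_one hδpos.le hδ1 hm
    have h6 : (n : ℝ) ^ m * δ ^ 2 ≤ δ / 2 := by
      have hδle' : δ * (2 * (n : ℝ) ^ m) ≤ 1 := by
        rw [le_div_iff₀ (by positivity)] at hδle
        exact hδle
      nlinarith
    have h7 : (1 - r ^ n) ^ m < δ := by nlinarith
    simp only [hfdef, hrdef]
    simp only [hrdef] at h7
    linarith
  -- f q > q on (p_c, 1)
  have hgt : ∀ q : ℝ, p_c < q → q < 1 → q < f q := by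
    intro q hq1 hq2
    by_contra hle
    push_neg at hle
    have hne : f q ≠ q := by
      intro h
      have : q = p_c := huniq q ⟨by linarith, hq2⟩ h
      linarith
    have hlt : f q < q := lt_of_le_of_ne hle hne
    obtain ⟨r, hqr, hr1, hrf⟩ := hnear q hq2
    -- IVT on g = f - id over [q, r]
    have hgcont : ContinuousOn (fun x => f x - x) (Set.Icc q r) :=
      (hcont.sub continuous_id).continuousOn
    have h0 : (0 : ℝ) ∈ Set.Ioo (f q - q) (f r - r) := ⟨by linarith, by linarith⟩
    have := intermediate_value_Ioo hqr.le hgcont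
    obtain ⟨c, hc, hc0⟩ := this h0
    have hcfix : f c = c := by
      have := hc0
      simp only [sub_eq_zero] at this
      exact this
    have : c = p_c := huniq c ⟨by linarith [hc.1], by linarith [hc.2]⟩ hcfix
    linarith [hc.1]
  -- the iterate sequence
  set a : ℕ → ℝ := fun k => f^[k] p with hadef
  have hstep : ∀ k, a (k + 1) = f (a k) := by
    intro k; simp only [hadef, Function.iterate_succ_apply']
  have hinv : ∀ k, p_c < a k ∧ a k ≤ 1 := by
    intro k
    induction k with
    | zero => exact ⟨hp.1, hp.2⟩
    | succ k ih =>
      obtain ⟨h1, h2⟩ := ih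
      rw [hstep]
      rcases eq_or_lt_of_le h2 with h | h
      · rw [h, hf1]; exact ⟨by linarith, le_refl 1⟩
      · refine ⟨lt_trans h1 (hgt _ h1 h), ?_⟩
        have := hmono (a k) 1 (by linarith) h.le le_rfl
        rw [hf1] at this; exact this
  have hmonoSeq : Monotone a := by
    apply monotone_nat_of_le_succ
    intro k
    obtain ⟨h1, h2⟩ := hinv k
    rw [hstep]
    rcases eq_or_lt_of_le h2 with h | h
    · rw [h, hf1]
    · exact (hgt _ h1 h).le
  have hbdd : BddAbove (Set.range a) := ⟨1, by rintro x ⟨k, rfl⟩; exact (hinv k).2⟩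
  set L : ℝ := ⨆ k, a k with hLdef
  have htend : Filter.Tendsto a Filter.atTop (nhds L) := tendsto_atTop_ciSup hmonoSeq hbdd
  have htend' : Filter.Tendsto (fun k => a (k + 1)) Filter.atTop (nhds L) :=
    htend.comp (Filter.tendsto_add_atTop_nat 1)
  have htendf : Filter.Tendsto (fun k => f (a k)) Filter.atTop (nhds (f L)) :=
    (hcont.tendsto L).comp htend
  have hLfix : f L = L := by
    apply tendsto_nhds_unique htendf
    have : (fun k => f (a k)) = fun k => a (k + 1) := by
      funext k; rw [hstep]
    rw [this]; exact htend'
  have hL0 : p_c < L := lt_of_lt_of_le hp.1 (le_ciSup hbdd 0)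
  have hL1 : L ≤ 1 := ciSup_le fun k => (hinv k).2
  have hLeq : L = 1 := by
    by_contra hne
    have hLlt : L < 1 := lt_of_le_of_ne hL1 hne
    have : L = p_c := huniq L ⟨by linarith, hLlt⟩ hLfix
    linarith
  rw [← hLeq]
  exact htend
end

section
/- Let m, m', n be real numbers with 2 ≤ m < m' and n ≥ 2. If p ∈ (0,1) satisfies 1 − (1 − p^n)^m = p and p' ∈ (0,1) satisfies 1 − (1 − p'^n)^{m'} = p', then p' < p. That is, the critical probability p_c(m,n) of the diamond fractal D(m,n) is strictly decreasing in the number of branches m. -/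
open Set Real

/-- The auxiliary function `E x = (x^(1-n) - 1)/(1-x)` is strictly decreasing on `(0,1)`. -/
private lemma E_strictAnti (n : ℝ) (hn : 2 ≤ n) :
    StrictAntiOn (fun x : ℝ => (x ^ (1 - n) - 1) / (1 - x)) (Set.Ioo (0:ℝ) 1) := by
  apply strictAntiOn_of_deriv_neg (convex_Ioo 0 1)
  · apply ContinuousOn.div
    · exact ContinuousOn.sub
        (fun x hx => (Real.continuousAt_rpow_const x (1 - n)
          (Or.inl (ne_of_gt hx.1))).continuousWithinAt) continuousOn_const
    · exact (continuous_const.sub continuous_id).continuousOn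
    · intro x hx
      exact sub_ne_zero.mpr (ne_of_gt hx.2)
  · rw [interior_Ioo]
    intro x hx
    obtain ⟨hx0, hx1⟩ := hx
    have hx1' : (1:ℝ) - x ≠ 0 := sub_ne_zero.mpr (ne_of_gt hx1)
    have h1 : HasDerivAt (fun x : ℝ => x ^ (1 - n) - 1) ((1 - n) * x ^ (1 - n - 1)) x :=
      (Real.hasDerivAt_rpow_const (Or.inl (ne_of_gt hx0))).sub_const 1
    have h2 : HasDerivAt (fun x : ℝ => 1 - x) (-1) x := (hasDerivAt_id x).const_sub 1
    have hd : HasDerivAt (fun x : ℝ => (x ^ (1 - n) - 1) / (1 - x)) _ x := h1.div h2 hx1'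
    rw [hd.deriv]
    apply div_neg_of_neg_of_pos _ (by positivity)
    have hxn : (0:ℝ) < x ^ n := Real.rpow_pos_of_pos hx0 n
    have hB : 1 + n * (x - 1) < x ^ n := by
      have := one_add_mul_self_lt_rpow_one_add (s := x - 1) (by linarith)
        (by intro h; apply ne_of_lt hx1; linarith) (p := n) (by linarith)
      simpa using this
    have ht : x ^ (1 - n - 1) = (x ^ n)⁻¹ := by
      rw [show (1 - n - 1 : ℝ) = -n by ring, Real.rpow_neg hx0.le]
    have hxx : x ^ (1 - n) = x * (x ^ n)⁻¹ := by
      rw [show (1 - n : ℝ) = 1 + -n by ring, Real.rpow_add hx0, Real.rpow_one,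
        Real.rpow_neg hx0.le]
    rw [ht, hxx]
    have key : (x ^ n)⁻¹ * (1 + n * (x - 1)) < 1 := by
      have h := mul_lt_mul_of_pos_left hB (inv_pos.mpr hxn)
      rwa [inv_mul_cancel₀ (ne_of_gt hxn)] at h
    have : (1 - n) * (x ^ n)⁻¹ * (1 - x) - (x * (x ^ n)⁻¹ - 1) * (-1)
        = (x ^ n)⁻¹ * (1 + n * (x - 1)) - 1 := by ring
    rw [this]
    linarith [key]

/-- Key comparison: `x ↦ x^(n-1)(1-x)/(1-x^n)` is strictly increasing, in cross-multiplied form. -/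
private lemma key_ineq (n u v : ℝ) (hn : 2 ≤ n) (hu : 0 < u) (huv : u < v) (hv : v < 1) :
    u ^ (n - 1) * (1 - u) * (1 - v ^ n) < v ^ (n - 1) * (1 - v) * (1 - u ^ n) := by
  have hv0 : 0 < v := hu.trans huv
  have hu1 : u < 1 := huv.trans hv
  have hE := E_strictAnti n hn ⟨hu, hu1⟩ ⟨hv0, hv⟩ huv
  simp only at hE
  have hid : ∀ x : ℝ, 0 < x → x < 1 →
      ((x ^ (1 - n) - 1) / (1 - x) + 1) * (x ^ (n - 1) * (1 - x)) = 1 - x ^ n := by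
    intro x hx0 hx1
    have h1x : (1:ℝ) - x ≠ 0 := sub_ne_zero.mpr (ne_of_gt hx1)
    have e1 : x ^ (1 - n) * x ^ (n - 1) = 1 := by
      rw [← Real.rpow_add hx0]; norm_num
    have e2 : x ^ (n - 1) * x = x ^ n := by
      nth_rewrite 2 [show n = n - 1 + 1 by ring]
      rw [Real.rpow_add hx0, Real.rpow_one]
    have expand : ((x ^ (1 - n) - 1) / (1 - x) + 1) * (x ^ (n - 1) * (1 - x))
        = (x ^ (1 - n) - 1) * x ^ (n - 1) + x ^ (n - 1) * (1 - x) := by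
      field_simp
    rw [expand]
    linear_combination e1 - e2
  have hu' := hid u hu hu1
  have hv' := hid v hv0 hv
  have hQ : 0 < u ^ (n - 1) * (1 - u) * (v ^ (n - 1) * (1 - v)) :=
    mul_pos (mul_pos (Real.rpow_pos_of_pos hu (n - 1)) (by linarith))
      (mul_pos (Real.rpow_pos_of_pos hv0 (n - 1)) (by linarith))
  calc u ^ (n - 1) * (1 - u) * (1 - v ^ n)
      = ((v ^ (1 - n) - 1) / (1 - v) + 1) * (u ^ (n - 1) * (1 - u) * (v ^ (n - 1) * (1 - v))) := by
        rw [← hv']; ring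
    _ < ((u ^ (1 - n) - 1) / (1 - u) + 1) * (u ^ (n - 1) * (1 - u) * (v ^ (n - 1) * (1 - v))) := by
        apply mul_lt_mul_of_pos_right _ hQ
        linarith [hE]
    _ = v ^ (n - 1) * (1 - v) * (1 - u ^ n) := by
        rw [← hu']; ring

/-- Let `m, m', n` be real numbers with `2 ≤ m < m'` and `n ≥ 2`. If `p ∈ (0,1)` satisfies
`1 − (1 − p^n)^m = p` and `p' ∈ (0,1)` satisfies `1 − (1 − p'^n)^{m'} = p'`, then `p' < p`:
the critical probability of `D(m,n)` is strictly decreasing in the number of branches `m`.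
(Here powers are real powers.) -/
theorem diamond_pc_decreasing_in_branches (m m' n : ℝ) (hm : 2 ≤ m) (hmm' : m < m')
    (hn : 2 ≤ n) (p p' : ℝ) (hp : p ∈ Set.Ioo (0 : ℝ) 1) (hp' : p' ∈ Set.Ioo (0 : ℝ) 1)
    (hfix : 1 - (1 - p ^ n) ^ m = p) (hfix' : 1 - (1 - p' ^ n) ^ m' = p') :
    p' < p := by
  obtain ⟨hp0, hp1⟩ := hp
  obtain ⟨hp0', hp1'⟩ := hp'
  have hn1 : (1:ℝ) ≤ n := by linarith
  have hpn0 : 0 < p ^ n := Real.rpow_pos_of_pos hp0 n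
  have hpn1 : p ^ n < 1 := Real.rpow_lt_one hp0.le hp1 (by linarith)
  have hpn0' : 0 < p' ^ n := Real.rpow_pos_of_pos hp0' n
  have hpn1' : p' ^ n < 1 := Real.rpow_lt_one hp0'.le hp1' (by linarith)
  have hfixm : (1 - p ^ n) ^ m = 1 - p := by linarith
  have hfixm' : (1 - p' ^ n) ^ m' = 1 - p' := by linarith
  have hma : m * Real.log (1 - p ^ n) = Real.log (1 - p) := by
    rw [← Real.log_rpow (by linarith), hfixm]
  have hma' : m' * Real.log (1 - p' ^ n) = Real.log (1 - p') := by
    rw [← Real.log_rpow (by linarith), hfixm']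
  have hα : 0 < -Real.log (1 - p ^ n) := by
    have := Real.log_neg (x := 1 - p ^ n) (by linarith) (by linarith)
    linarith
  have hα' : 0 < -Real.log (1 - p' ^ n) := by
    have := Real.log_neg (x := 1 - p' ^ n) (by linarith) (by linarith)
    linarith
  have ha : 0 < -Real.log (1 - p) := by
    have := Real.log_neg (x := 1 - p) (by linarith) (by linarith)
    linarith
  have ha' : 0 < -Real.log (1 - p') := by
    have := Real.log_neg (x := 1 - p') (by linarith) (by linarith)
    linarith
  by_contra hcon
  push_neg at hcon
  rcases eq_or_lt_of_le hcon with heq | hlt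
  · subst heq
    nlinarith [hα, hma, hma']
  · -- p < p' : derive a contradiction via two applications of Cauchy's MVT
    have haa' : -Real.log (1 - p) < -Real.log (1 - p') := by
      have := Real.log_lt_log (by linarith : (0:ℝ) < 1 - p') (by linarith : 1 - p' < 1 - p)
      linarith
    -- derivative facts
    have hderivA : ∀ q : ℝ, q < 1 → ∀ x ∈ Set.Ioo (0:ℝ) q,
        HasDerivAt (fun y : ℝ => -Real.log (1 - y ^ n)) (n * x ^ (n - 1) / (1 - x ^ n)) x := by
      intro q hq x hx
      have hx0 := hx.1
      have hx1 : x < 1 := lt_trans hx.2 hq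
      have hxn1 : x ^ n < 1 := Real.rpow_lt_one hx0.le hx1 (by linarith)
      have h1 : HasDerivAt (fun y : ℝ => y ^ n) (n * x ^ (n - 1)) x :=
        Real.hasDerivAt_rpow_const (Or.inr hn1)
      have h2 : HasDerivAt (fun y : ℝ => 1 - y ^ n) (-(n * x ^ (n - 1))) x := h1.const_sub 1
      have h3 : HasDerivAt (fun y : ℝ => Real.log (1 - y ^ n))
          (-(n * x ^ (n - 1)) / (1 - x ^ n)) x := h2.log (by linarith [hxn1])
      have h4 : HasDerivAt (fun y : ℝ => -Real.log (1 - y ^ n)) _ x := h3.neg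
      convert h4 using 1
      ring
    have hderivB : ∀ q : ℝ, q < 1 → ∀ x ∈ Set.Ioo (0:ℝ) q,
        HasDerivAt (fun y : ℝ => -Real.log (1 - y)) (1 / (1 - x)) x := by
      intro q hq x hx
      have hx1 : x < 1 := lt_trans hx.2 hq
      have h2 : HasDerivAt (fun y : ℝ => 1 - y) (-1) x := (hasDerivAt_id x).const_sub 1
      have h3 : HasDerivAt (fun y : ℝ => Real.log (1 - y)) ((-1) / (1 - x)) x :=
        h2.log (by linarith)
      have h4 : HasDerivAt (fun y : ℝ => -Real.log (1 - y)) _ x := h3.neg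
      convert h4 using 1
      ring
    have hcontA : ∀ q r : ℝ, 0 ≤ q → r < 1 →
        ContinuousOn (fun y : ℝ => -Real.log (1 - y ^ n)) (Set.Icc q r) := by
      intro q r hq hr
      apply ContinuousOn.neg
      apply ContinuousOn.log
      · apply ContinuousOn.sub continuousOn_const
        exact fun x hx => (Real.continuousAt_rpow_const x n (Or.inr (by linarith))).continuousWithinAt
      · intro x hx
        have hx0 : 0 ≤ x := le_trans hq hx.1
        have hx1 : x < 1 := lt_of_le_of_lt hx.2 hr
        have : x ^ n < 1 := Real.rpow_lt_one hx0 hx1 (by linarith)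
        linarith
    have hcontB : ∀ q r : ℝ, r < 1 →
        ContinuousOn (fun y : ℝ => -Real.log (1 - y)) (Set.Icc q r) := by
      intro q r hr
      apply ContinuousOn.neg
      apply ContinuousOn.log
      · exact (continuous_const.sub continuous_id).continuousOn
      · intro x hx
        have hx1 : x < 1 := lt_of_le_of_lt hx.2 hr
        linarith
    -- MVT on [0, p]
    obtain ⟨c₂, hc₂, e₂⟩ := exists_ratio_hasDerivAt_eq_ratio_slope
      (fun y : ℝ => -Real.log (1 - y ^ n)) (fun x => n * x ^ (n - 1) / (1 - x ^ n)) hp0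
      (hcontA 0 p le_rfl hp1) (hderivA p hp1)
      (fun y : ℝ => -Real.log (1 - y)) (fun x => 1 / (1 - x))
      (hcontB 0 p hp1) (hderivB p hp1)
    -- MVT on [p, p']
    obtain ⟨c, hc, e⟩ := exists_ratio_hasDerivAt_eq_ratio_slope
      (fun y : ℝ => -Real.log (1 - y ^ n)) (fun x => n * x ^ (n - 1) / (1 - x ^ n)) hlt
      (hcontA p p' hp0.le hp1') (by
        intro x hx
        exact hderivA p' hp1' x ⟨lt_trans hp0 hx.1, hx.2⟩)
      (fun y : ℝ => -Real.log (1 - y)) (fun x => 1 / (1 - x))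
      (hcontB p p' hp1') (by
        intro x hx
        exact hderivB p' hp1' x ⟨lt_trans hp0 hx.1, hx.2⟩)
    simp only [Real.zero_rpow (by linarith : n ≠ 0), sub_zero, Real.log_one, neg_zero] at e₂
    -- facts about c₂ and c
    have hc₂0 : 0 < c₂ := hc₂.1
    have hc₂1 : c₂ < 1 := lt_trans hc₂.2 hp1
    have hc0 : 0 < c := lt_trans hp0 hc.1
    have hc1 : c < 1 := lt_trans hc.2 hp1'
    have hc₂n1 : c₂ ^ n < 1 := Real.rpow_lt_one hc₂0.le hc₂1 (by linarith)
    have hcn1 : c ^ n < 1 := Real.rpow_lt_one hc0.le hc1 (by linarith)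
    have hc₂n0 : 0 < c₂ ^ n := Real.rpow_pos_of_pos hc₂0 n
    have hcn0 : 0 < c ^ n := Real.rpow_pos_of_pos hc0 n
    -- rewrite the MVT identities without divisions
    have E2 : (-Real.log (1 - p)) * (n * c₂ ^ (n - 1) * (1 - c₂))
        = (-Real.log (1 - p ^ n)) * (1 - c₂ ^ n) := by
      have d1 : (1:ℝ) - c₂ ^ n ≠ 0 := by linarith
      have d2 : (1:ℝ) - c₂ ≠ 0 := by linarith [hc₂1]
      field_simp at e₂
      linarith [e₂]
    have E : ((-Real.log (1 - p')) - (-Real.log (1 - p))) * (n * c ^ (n - 1) * (1 - c))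
        = ((-Real.log (1 - p' ^ n)) - (-Real.log (1 - p ^ n))) * (1 - c ^ n) := by
      have d1 : (1:ℝ) - c ^ n ≠ 0 := by linarith
      have d2 : (1:ℝ) - c ≠ 0 := by linarith [hc1]
      field_simp at e
      linarith [e]
    -- the key strict inequality between the two mean-value points
    have hKL := key_ineq n c₂ c hn hc₂0 (lt_trans hc₂.2 hc.1) hc1
    -- abbreviations
    set a : ℝ := -Real.log (1 - p) with ha_def
    set a' : ℝ := -Real.log (1 - p') with ha'_def
    set α : ℝ := -Real.log (1 - p ^ n) with hα_def
    set α' : ℝ := -Real.log (1 - p' ^ n) with hα'_def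
    have hmeq : m * α = a := by simp only [ha_def, hα_def]; linarith [hma]
    have hmeq' : m' * α' = a' := by simp only [ha'_def, hα'_def]; linarith [hma']
    set num2 : ℝ := n * c₂ ^ (n - 1) * (1 - c₂) with hnum2
    set num : ℝ := n * c ^ (n - 1) * (1 - c) with hnum
    set den2 : ℝ := 1 - c₂ ^ n with hden2
    set den : ℝ := 1 - c ^ n with hden
    have hnum2pos : 0 < num2 := by
      rw [hnum2]
      exact mul_pos (mul_pos (by linarith) (Real.rpow_pos_of_pos hc₂0 (n - 1))) (by linarith)
    have hnumpos : 0 < num := by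
      rw [hnum]
      exact mul_pos (mul_pos (by linarith) (Real.rpow_pos_of_pos hc0 (n - 1))) (by linarith)
    have hden2pos : 0 < den2 := by rw [hden2]; linarith
    have hdenpos : 0 < den := by rw [hden]; linarith
    have hKL' : num2 * den < num * den2 := by
      rw [hnum2, hnum]
      have := mul_lt_mul_of_pos_left hKL (show (0:ℝ) < n by linarith)
      linarith [this]
    clear_value a a' α α' num num2 den den2
    -- combine everything
    have h5 : (α' * a - α * a') * (den * den2)
        = a * (a' - a) * (num * den2 - num2 * den) := by
      linear_combination (-(a * den2)) * E + ((a' - a) * den) * E2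
    have h6 : 0 < α' * a - α * a' := by
      have hr : 0 < a * (a' - a) * (num * den2 - num2 * den) := by
        apply mul_pos (mul_pos ha (by linarith)) (by linarith)
      have hdd : 0 < den * den2 := mul_pos hdenpos hden2pos
      rcases le_or_gt (α' * a - α * a') 0 with hX | hX
      · exfalso
        have hle : (α' * a - α * a') * (den * den2) ≤ 0 :=
          mul_nonpos_iff.mpr (Or.inr ⟨hX, hdd.le⟩)
        linarith [h5, hr, hle]
      · exact hX
    -- from m * α = a, m' * α' = a' and α'/a' > α/a we get m > m', contradiction
    have h7 : 0 < α' * (m * α) - α * (m' * α') := by rw [hmeq, hmeq']; exact h6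
    have h8 := mul_lt_mul_of_pos_right hmm' (mul_pos hα hα')
    linarith [h7, h8]
end
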